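/- For 0 < R < 1, the equation 27x⁴ − 18x² − 4(R + R⁻¹)x − 1 = 0 has exactly two real solutions, one positive and one lying in (−1/3, 0); let a denote the solution in (−1/3, 0). Define b := ((3a²+1)/(2a) − sqrt(((3a²+1)/(2a))² − 4))/2 and c := (1−3a²)/(2a) + sqrt(((3a²+1)/(2a))² − 4). Then the polynomial identity w − a + R(1−aw)w² = −aR(w−b)²(w−c) holds for all w ∈ ℂ, and the inequalities −1 < 1/b < c < a < 0 hold. -/

import Mathlib

open Complex MeasureTheory Set Filter Metric Polynomial
open scoped ENNReal

noncomputable section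

/-- The open annulus `r < |w| < s` in the complex plane. -/
def annul (r s : ℝ) : Set ℂ := {w : ℂ | r < ‖w‖ ∧ ‖w‖ < s}

/-- Multiplicity (order) of a holomorphic map at a point: the least `α ≥ 1` such that the
`α`-th derivative is nonzero (so a solution `ω` of `h w = c` is *simple* iff `multOrd h ω = 1`). -/
def multOrd (h : ℂ → ℂ) (ω : ℂ) : ℕ := sInf {α : ℕ | 1 ≤ α ∧ iteratedDeriv α h ω ≠ 0}

/-- `Gset ψ r` is the set `G_r := ℂ ∖ closure (ψ '' {r < |w|})`. -/
def Gset (ψ : ℂ → ℂ) (r : ℝ) : Set ℂ := (closure (ψ '' {w : ℂ | r < ‖w‖}))ᶜ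

/-- `Lset ψ r` is the level curve `L_r := ψ '' {|w| = r}`. -/
def Lset (ψ : ℂ → ℂ) (r : ℝ) : Set ℂ := ψ '' {w : ℂ | ‖w‖ = r}

/-- The support of a measure on `ℂ`: points all of whose neighborhoods have positive measure. -/
def msupport (m : Measure ℂ) : Set ℂ := {x : ℂ | ∀ U ∈ nhds x, m U ≠ 0}

/-- The normalized zero-counting measure `ν` of a polynomial: `(1/deg q)` times the sum of
unit point masses at the roots of `q`, counted with multiplicity. -/
def zeroMeasure (q : Polynomial ℂ) : Measure ℂ :=
  ((q.natDegree : ℝ≥0∞))⁻¹ • (q.roots.map (fun z => MeasureTheory.Measure.dirac z)).sum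

/-- The setting of the paper: `L₁` is an analytic Jordan curve with interior domain `G1`
(bounded, open, connected); `psi` is the exterior conformal map of `Δ₁` onto the exterior
domain `Ω₁` (with `ψ(∞) = ∞`, `ψ'(∞) > 0`), analytically and univalently continued to
`{ρ < |w|}` with `ρ < 1` smallest possible; `phi` is a conformal map of `G1` onto the unit
disk together with its one-to-one meromorphic continuation to `G_{1/ρ}`; `hphi` (i.e. `h_φ`)
is the meromorphic continuation of `φ ∘ ψ` to the annulus `{μ < |w| < 1/ρ}` with `μ ≥ 0`
smallest possible; and `p n` are the orthonormal polynomials of `G1` with respect to the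
normalized area measure `π⁻¹ dx dy`. -/
structure CarlemanSetup where
  G1 : Set ℂ
  psi : ℂ → ℂ
  phi : ℂ → ℂ
  hphi : ℂ → ℂ
  ρ : ℝ
  μ : ℝ
  p : ℕ → Polynomial ℂ
  hρ_nonneg : 0 ≤ ρ
  hρ_lt_one : ρ < 1
  hμ_nonneg : 0 ≤ μ
  hμ_le_ρ : μ ≤ ρ
  hG1_open : IsOpen G1
  hG1_bounded : Bornology.IsBounded G1
  hG1_conn : IsConnected G1
  hψ_an : AnalyticOnNhd ℂ psi {w : ℂ | ρ < ‖w‖}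
  hψ_inj : Set.InjOn psi {w : ℂ | ρ < ‖w‖}
  hψ_image : psi '' {w : ℂ | 1 < ‖w‖} = (closure G1)ᶜ
  hψ_infty : ∃ c : ℝ, 0 < c ∧
    Filter.Tendsto (fun w => psi w / w) (Bornology.cobounded ℂ) (nhds (c : ℂ))
  hρ_min : ∀ ρ' : ℝ, 0 ≤ ρ' → ρ' < ρ →
    ¬ ∃ g : ℂ → ℂ, AnalyticOnNhd ℂ g {w : ℂ | ρ' < ‖w‖} ∧
      Set.InjOn g {w : ℂ | ρ' < ‖w‖} ∧
      Set.EqOn g psi {w : ℂ | 1 < ‖w‖}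
  hφ_an : AnalyticOnNhd ℂ phi G1
  hφ_inj : Set.InjOn phi G1
  hφ_image : phi '' G1 = Metric.ball (0 : ℂ) 1
  hφ_mero : MeromorphicOn phi (Gset psi ρ⁻¹)
  hhφ_mero : MeromorphicOn hphi (annul μ ρ⁻¹)
  hhφ_eq : Set.EqOn hphi (phi ∘ psi) {w : ℂ | ρ < ‖w‖ ∧ ‖w‖ ≤ 1}
  hμ_min : ∀ μ' : ℝ, 0 ≤ μ' → μ' < μ →
    ¬ ∃ g : ℂ → ℂ, MeromorphicOn g (annul μ' ρ⁻¹) ∧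
      Set.EqOn g (phi ∘ psi) {w : ℂ | ρ < ‖w‖ ∧ ‖w‖ ≤ 1}
  hp_deg : ∀ n : ℕ, (p n).degree = n
  hp_lead : ∀ n : ℕ, 0 < ((p n).leadingCoeff).re ∧ ((p n).leadingCoeff).im = 0
  hp_orth : ∀ n m : ℕ, (∫ z in G1, (p n).eval z * (starRingEnd ℂ) ((p m).eval z)) =
      if n = m then (Real.pi : ℂ) else 0

namespace CarlemanSetup

variable (S : CarlemanSetup)

/-- The solutions of the equation `h_φ(w) = φ(z)` lying in the annulus `μ < |w| < 1`. -/
def sols (z : ℂ) : Set ℂ :=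
  {w : ℂ | S.μ < ‖w‖ ∧ ‖w‖ < 1 ∧ S.hphi w = S.phi z}

/-- `Σ`: the set of `z ∈ G₁` for which `h_φ(w) = φ(z)` has a solution in `μ < |w| < 1`. -/
def Sig : Set ℂ := {z ∈ S.G1 | (S.sols z).Nonempty}

/-- `Σ₀ := G₁ ∖ Σ`. -/
def Sig0 : Set ℂ := S.G1 \ S.Sig

/-- The solutions of `h_φ(w) = φ(z)` in `μ < |w| < 1` of largest modulus. -/
def topSols (z : ℂ) : Set ℂ :=
  {w ∈ S.sols z | ∀ v ∈ S.sols z, ‖v‖ ≤ ‖w‖}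

/-- `Σ_q` for `q ≥ 1`: the set of `z ∈ Σ` whose solutions of largest modulus
`ω_{z,1}, …, ω_{z,s}` have total multiplicity `α_{z,1} + ⋯ + α_{z,s} = q`.
In particular `Σ₁ = SigP 1` consists of those `z` for which there is exactly one solution of
largest modulus and it is simple. -/
def SigP (q : ℕ) : Set ℂ :=
  {z ∈ S.Sig | ∃ hfin : (S.topSols z).Finite,
     (∀ w ∈ S.topSols z, 1 ≤ multOrd S.hphi w) ∧
     ∑ w ∈ hfin.toFinset, multOrd S.hphi w = q}

end CarlemanSetup

/-- For `a ∈ (−1/3, 0)`, the number `b` of the Cassini-oval example. -/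
def bval (a : ℝ) : ℝ :=
  ((3 * a ^ 2 + 1) / (2 * a) - Real.sqrt (((3 * a ^ 2 + 1) / (2 * a)) ^ 2 - 4)) / 2

/-- For `a ∈ (−1/3, 0)`, the number `c` of the Cassini-oval example. -/
def cval (a : ℝ) : ℝ :=
  (1 - 3 * a ^ 2) / (2 * a) + Real.sqrt (((3 * a ^ 2 + 1) / (2 * a)) ^ 2 - 4)

set_option maxHeartbeats 8000000

/-- For `0 < R < 1` the quartic `27x⁴ − 18x² − 4(R+R⁻¹)x − 1` has exactly two real roots,
one positive and one in `(−1/3, 0)`; and for the root `a ∈ (−1/3, 0)` the identity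
`w − a + R(1−aw)w² = −aR(w−b)²(w−c)` holds for all `w ∈ ℂ`, together with the
inequalities `−1 < 1/b < c < a < 0`. -/
theorem statement13 (R : ℝ) (hR0 : 0 < R) (hR1 : R < 1) :
    (∃ x₁ x₂ : ℝ, x₁ ≠ x₂ ∧ 0 < x₁ ∧ x₂ ∈ Set.Ioo (-(1 / 3) : ℝ) 0 ∧
      27 * x₁ ^ 4 - 18 * x₁ ^ 2 - 4 * (R + R⁻¹) * x₁ - 1 = 0 ∧
      27 * x₂ ^ 4 - 18 * x₂ ^ 2 - 4 * (R + R⁻¹) * x₂ - 1 = 0 ∧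
      ∀ x : ℝ, 27 * x ^ 4 - 18 * x ^ 2 - 4 * (R + R⁻¹) * x - 1 = 0 → x = x₁ ∨ x = x₂) ∧
    ∀ a : ℝ, a ∈ Set.Ioo (-(1 / 3) : ℝ) 0 →
      27 * a ^ 4 - 18 * a ^ 2 - 4 * (R + R⁻¹) * a - 1 = 0 →
      (∀ w : ℂ,
        w - (a : ℂ) + (R : ℂ) * (1 - (a : ℂ) * w) * w ^ 2 =
          -(a : ℂ) * (R : ℂ) * (w - (bval a : ℂ)) ^ 2 * (w - (cval a : ℂ))) ∧
      -1 < (bval a)⁻¹ ∧ (bval a)⁻¹ < cval a ∧ cval a < a ∧ a < 0 := by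
  have hR : R ≠ 0 := ne_of_gt hR0
  have hK2 : 2 < R + R⁻¹ := by
    have h1 : 0 < (R - 1) ^ 2 := by
      have : R - 1 ≠ 0 := sub_ne_zero.2 (ne_of_lt hR1)
      positivity
    have h2 : R + R⁻¹ - 2 = (R - 1) ^ 2 / R := by field_simp; ring
    nlinarith [div_pos h1 hR0]
  constructor
  · -- Part 1: exactly two real roots
    obtain ⟨K, hKd⟩ : ∃ K : ℝ, R + R⁻¹ = K := ⟨_, rfl⟩
    rw [hKd] at hK2 ⊢
    have hKpos : 0 < K := by linarith
    set f : ℝ → ℝ := fun x => 27 * x ^ 4 - 18 * x ^ 2 - 4 * K * x - 1 with hfdef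
    have hcont : ContinuousOn f (Set.univ) := Continuous.continuousOn (by fun_prop)
    -- existence of positive root
    obtain ⟨x₁, hx₁mem, hx₁root⟩ :=
      intermediate_value_Ioo (by linarith : (0:ℝ) ≤ K) (hcont.mono (Set.subset_univ _))
        (show (0:ℝ) ∈ Set.Ioo (f 0) (f K) by
          constructor
          · show 27 * (0:ℝ) ^ 4 - 18 * 0 ^ 2 - 4 * K * 0 - 1 < 0; norm_num
          · show (0:ℝ) < 27 * K ^ 4 - 18 * K ^ 2 - 4 * K * K - 1
            have hK4 : 4 < K ^ 2 := by nlinarith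
            nlinarith [hK4, mul_pos (show (0:ℝ) < K^2 - 4 by linarith) (show (0:ℝ) < K^2 by linarith)])
    obtain ⟨x₂, hx₂mem, hx₂root⟩ :=
      intermediate_value_Ioo' (by norm_num : (-(1/3):ℝ) ≤ 0) (hcont.mono (Set.subset_univ _))
        (show (0:ℝ) ∈ Set.Ioo (f 0) (f (-(1/3))) by
          constructor
          · show 27 * (0:ℝ) ^ 4 - 18 * 0 ^ 2 - 4 * K * 0 - 1 < 0; norm_num
          · show (0:ℝ) < 27 * (-(1/3):ℝ) ^ 4 - 18 * (-(1/3)) ^ 2 - 4 * K * (-(1/3)) - 1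
            nlinarith [hK2])
    have hx₁root : 27 * x₁ ^ 4 - 18 * x₁ ^ 2 - 4 * K * x₁ - 1 = 0 := hx₁root
    have hx₂root : 27 * x₂ ^ 4 - 18 * x₂ ^ 2 - 4 * K * x₂ - 1 = 0 := hx₂root
    obtain ⟨hx₁0, hx₁K⟩ := hx₁mem
    obtain ⟨hx₂l, hx₂r⟩ := hx₂mem
    -- any positive root is > 1
    have hbig : ∀ x : ℝ, 0 < x → 27 * x ^ 4 - 18 * x ^ 2 - 4 * K * x - 1 = 0 → 1 < x := by
      intro x hx0 hx
      have e : (x - 1) * (3 * x + 1) ^ 3 = 4 * x * (K - 2) := by linear_combination hx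
      nlinarith [e, mul_pos hx0 (show (0:ℝ) < K - 2 by linarith), pow_pos (show (0:ℝ) < 3 * x + 1 by linarith) 3]
    have hx₁1 : 1 < x₁ := hbig x₁ hx₁0 hx₁root
    -- no roots ≤ -1/3
    have hleft : ∀ x : ℝ, x ≤ -(1/3) → 27 * x ^ 4 - 18 * x ^ 2 - 4 * K * x - 1 ≠ 0 := by
      intro x hx hroot
      have e : (-3 * x - 1) ^ 3 * (1 - x) + (-x) * (4 * K - 8) = 0 := by linear_combination hroot
      nlinarith [e, mul_nonneg (pow_nonneg (show (0:ℝ) ≤ -3 * x - 1 by linarith) 3)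
          (show (0:ℝ) ≤ 1 - x by linarith),
        mul_pos (show (0:ℝ) < -x by linarith) (show (0:ℝ) < 4 * K - 8 by linarith)]
    refine ⟨x₁, x₂, by linarith, hx₁0, ⟨hx₂l, hx₂r⟩, hx₁root, hx₂root, ?_⟩
    intro x hx
    rcases lt_trichotomy x 0 with hneg | hzero | hpos
    · -- x < 0 : show x = x₂
      right
      have hxm : -(1/3) < x := by
        by_contra h
        push_neg at h
        exact hleft x h hx
      by_contra hne
      have hGa : (x - x₂) * (27 * (x + x₂) * (x ^ 2 + x₂ ^ 2) - 18 * (x + x₂) - 4 * K) = 0 := by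
        linear_combination hx - hx₂root
      have hG : 27 * (x + x₂) * (x ^ 2 + x₂ ^ 2) - 18 * (x + x₂) - 4 * K = 0 := by
        rcases mul_eq_zero.1 hGa with h | h
        · exact absurd (sub_eq_zero.1 h) hne
        · exact h
      -- contradiction: with p = 1+3x, q = 1+3x₂ in (0,1)
      nlinarith [hG, mul_pos (show (0:ℝ) < 1 + 3*x by linarith) (show (0:ℝ) < 1 + 3*x₂ by linarith),
        mul_nonneg (add_nonneg (sq_nonneg (1 + 3*x)) (sq_nonneg (1 + 3*x₂)))
          (show (0:ℝ) ≤ 4 - (1 + 3*x) - (1 + 3*x₂) by linarith)]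
    · exfalso; rw [hzero] at hx; norm_num at hx
    · -- x > 0 : show x = x₁
      left
      have hx1 : 1 < x := hbig x hpos hx
      by_contra hne
      have hG1a : (x - x₂) * (27 * (x + x₂) * (x ^ 2 + x₂ ^ 2) - 18 * (x + x₂) - 4 * K) = 0 := by
        linear_combination hx - hx₂root
      have hG1 : 27 * (x + x₂) * (x ^ 2 + x₂ ^ 2) - 18 * (x + x₂) - 4 * K = 0 := by
        rcases mul_eq_zero.1 hG1a with h | h
        · exact absurd (sub_eq_zero.1 h) (by intro hh; rw [hh] at hx1; linarith)
        · exact h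
      have hG2a : (x₁ - x₂) * (27 * (x₁ + x₂) * (x₁ ^ 2 + x₂ ^ 2) - 18 * (x₁ + x₂) - 4 * K) = 0 := by
        linear_combination hx₁root - hx₂root
      have hG2 : 27 * (x₁ + x₂) * (x₁ ^ 2 + x₂ ^ 2) - 18 * (x₁ + x₂) - 4 * K = 0 := by
        rcases mul_eq_zero.1 hG2a with h | h
        · exact absurd (sub_eq_zero.1 h) (by intro hh; rw [hh] at hx₁1; linarith)
        · exact h
      have hDa : (x - x₁) * (27 * (x ^ 2 + x₁ ^ 2 + x₂ ^ 2 + x * x₁ + x * x₂ + x₁ * x₂) - 18) = 0 := by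
        linear_combination hG1 - hG2
      have hD : 27 * (x ^ 2 + x₁ ^ 2 + x₂ ^ 2 + x * x₁ + x * x₂ + x₁ * x₂) - 18 = 0 := by
        rcases mul_eq_zero.1 hDa with h | h
        · exact absurd (sub_eq_zero.1 h) hne
        · exact h
      nlinarith [hD, sq_nonneg (x + x₂), sq_nonneg (x₁ + x₂),
        mul_pos (show (0:ℝ) < x + x₁ by linarith) (show (0:ℝ) < x + x₁ by linarith)]
  · -- Part 2
    intro a ha hqa
    obtain ⟨ha1, ha2⟩ := ha
    have ha0 : a ≠ 0 := ne_of_lt ha2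
    have h9 : 0 < 1 - 9*a^2 := by nlinarith [ha1, ha2]
    have h9' : (1:ℝ) - 9*a^2 ≠ 0 := ne_of_gt h9
    have h9'' : (1:ℝ) - a^2*9 ≠ 0 := by rw [mul_comm]; exact h9'
    have hKR : (R + R⁻¹) * R = R^2 + 1 := by field_simp
    have hq : -4*a*R^2 + (27*a^4-18*a^2-1)*R - 4*a = 0 := by
      linear_combination R * hqa + 4*a*hKR
    have hS0 : 0 ≤ 2*(1-R^2)/(R*(1-9*a^2)) := by
      apply div_nonneg (by nlinarith) (by positivity)
    have hs : Real.sqrt (((3 * a ^ 2 + 1) / (2 * a)) ^ 2 - 4) = 2*(1-R^2)/(R*(1-9*a^2)) := by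
      have hsq : ((3 * a ^ 2 + 1) / (2 * a)) ^ 2 - 4 = (2*(1-R^2)/(R*(1-9*a^2)))^2 := by
        field_simp
        linear_combination (4*a*R^2 + (27*a^4-18*a^2-1)*R + 4*a) * hq
      rw [hsq, Real.sqrt_sq hS0]
    have hR : R ≠ 0 := ne_of_gt hR0
    have ha0 : a ≠ 0 := ne_of_lt ha2
    have h3a : 0 < 3*a + 1 := by linarith
    have h9 : 0 < 1 - 9*a^2 := by nlinarith
    have h9' : (1:ℝ) - 9*a^2 ≠ 0 := ne_of_gt h9
    have hbe : bval a = ((3*a^2+1)*R*(1-9*a^2) - 4*a*(1-R^2)) / (4*a*R*(1-9*a^2)) := by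
      unfold bval; rw [hs]; field_simp; ring
    have hce : cval a = (R*(1-9*a^2)*(1-3*a^2) + 4*a*(1-R^2)) / (2*a*R*(1-9*a^2)) := by
      unfold cval; rw [hs]; field_simp; ring
    have hNb : 0 < (3*a^2+1)*R*(1-9*a^2) - 4*a*(1-R^2) := by
      nlinarith [mul_pos (mul_pos (show (0:ℝ) < 3*a^2+1 by positivity) hR0) h9,
        mul_pos (neg_pos.2 ha2) (show (0:ℝ) < 1 - R^2 by nlinarith)]
    have hDb : 4*a*R*(1-9*a^2) < 0 := by nlinarith [mul_pos (mul_pos hR0 h9) (neg_pos.2 ha2)]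
    have hDc : 2*a*R*(1-9*a^2) < 0 := by nlinarith [mul_pos (mul_pos hR0 h9) (neg_pos.2 ha2)]
    have hDbne : (4*a*R*(1-9*a^2)) ≠ 0 := ne_of_lt hDb
    have hDcne : (2*a*R*(1-9*a^2)) ≠ 0 := ne_of_lt hDc
    have hbinv : (bval a)⁻¹ = (4*a*R*(1-9*a^2)) / ((3*a^2+1)*R*(1-9*a^2) - 4*a*(1-R^2)) := by
      rw [hbe, inv_div]
    -- coefficient identities
    have e1 : a * (2 * bval a + cval a) = 1 := by
      rw [hbe, hce]
      field_simp
      ring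
    have e2 : a * R * ((bval a)^2 + 2 * bval a * cval a) = -1 := by
      rw [hbe, hce]
      field_simp
      linear_combination ((-5)*R + (12)*a + (12)*a*R^2 + (-18)*a^2*R + (-81)*a^4*R) * hq
    have e3 : R * ((bval a)^2 * cval a) = -1 := by
      rw [hbe, hce]
      field_simp
      linear_combination ((-1)*R^2 + (8)*a*R + (-16)*a^2 + (-22)*a^2*R^2 + (16)*a^2*R^4 + (72)*a^3*R + (-72)*a^3*R^3 + (216)*a^4*R^2 + (-432)*a^5*R + (-216)*a^5*R^3 + (486)*a^6*R^2 + (729)*a^8*R^2) * hq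
    -- key sign facts
    have F2 : (4*a + R*(9*a^4+2*a^2+1)) * (4*a*R + (9*a^4+2*a^2+1)) = R*(4*a^4*(1-9*a^2)^2) := by
      linear_combination (-(9*a^4+2*a^2+1)) * hq
    have h2f : 0 < 4*a*R + (9*a^4+2*a^2+1) := by
      nlinarith [mul_pos h3a (show 0 < 3*a^3 - a^2 + a + 1 by nlinarith), mul_pos (mul_pos (neg_pos.2 ha2) hR0) (show (0:ℝ) < 1 - R by linarith)]
    have P2 : 0 < 4*a + R*(9*a^4+2*a^2+1) := by
      by_contra hcon
      push_neg at hcon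
      linarith [F2, mul_pos hR0 (show 0 < 4*a^4*(1-9*a^2)^2 by positivity),
        mul_nonneg (neg_nonneg.2 hcon) h2f.le]
    have F3 : (4*a + R*(1+27*a^4)) * (4*a*R + (1+27*a^4)) = R*(-2*a^2*(1-9*a^2)^3) := by
      linear_combination (-(1+27*a^4)) * hq
    have h3f : 0 < 4*a*R + (1+27*a^4) := by
      nlinarith [mul_pos (mul_pos h3a h3a) (show 0 < 3*a^2 - 2*a + 1 by nlinarith [sq_nonneg (a-1), sq_nonneg a]), mul_pos (mul_pos (neg_pos.2 ha2) hR0) (show (0:ℝ) < 1 - R by linarith)]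
    have P3 : 4*a + R*(1+27*a^4) < 0 := by
      by_contra hcon
      push_neg at hcon
      linarith [F3, mul_pos hR0 (show 0 < 2*a^2*(1-9*a^2)^3 by positivity),
        mul_nonneg hcon h3f.le]
    refine ⟨?_, ?_, ?_, ?_, ha2⟩
    · -- complex identity
      intro w
      have c1 : (a:ℂ) * (2 * (bval a : ℂ) + (cval a : ℂ)) = 1 := by exact_mod_cast e1
      have c2 : (a:ℂ) * (R:ℂ) * ((bval a : ℂ)^2 + 2 * (bval a : ℂ) * (cval a : ℂ)) = -1 := by
        exact_mod_cast e2
      have c3 : (R:ℂ) * ((bval a : ℂ)^2 * (cval a : ℂ)) = -1 := by exact_mod_cast e3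
      linear_combination (-(R:ℂ) * w^2) * c1 + w * c2 + (-(a:ℂ)) * c3
    · -- -1 < 1/b
      rw [hbinv, lt_div_iff₀ hNb]
      have hfac : R*(1-6*a-9*a^2) - 2 < 0 := by
        nlinarith [sq_nonneg (3*a+1), mul_pos hR0 (show 0 < 1-6*a-9*a^2 by nlinarith)]
      have hDbNb : 4*a*R*(1-9*a^2) + ((3*a^2+1)*R*(1-9*a^2) - 4*a*(1-R^2))
          = 4*a*(R*(1-6*a-9*a^2)-2) := by linear_combination -hq
      linarith [hDbNb, mul_pos (neg_pos.2 ha2) (neg_pos.2 hfac)]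
    · -- 1/b < c
      rw [hbinv, hce, show (R*(1-9*a^2)*(1-3*a^2) + 4*a*(1-R^2)) / (2*a*R*(1-9*a^2))
          = (-(R*(1-9*a^2)*(1-3*a^2) + 4*a*(1-R^2))) / (-(2*a*R*(1-9*a^2))) by rw [neg_div_neg_eq],
        div_lt_div_iff₀ hNb (by linarith : 0 < -(2*a*R*(1-9*a^2)))]
      have hI3 : R*(1-9*a^2)^2 + 4*a*(1-R^2) < 0 := by nlinarith [P3, hq]
      -- X * Db = I3 * Nb * (-Dc), X = Db*Dc - Nb*Nc
      have hXDb : ((4*a*R*(1-9*a^2)) * (2*a*R*(1-9*a^2))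
            - ((3*a^2+1)*R*(1-9*a^2) - 4*a*(1-R^2)) * (R*(1-9*a^2)*(1-3*a^2) + 4*a*(1-R^2)))
            * (4*a*R*(1-9*a^2))
          = (R*(1-9*a^2)^2 + 4*a*(1-R^2)) * ((3*a^2+1)*R*(1-9*a^2) - 4*a*(1-R^2))
            * (-(2*a*R*(1-9*a^2))) := by
        linear_combination (2*a*R^2 + (-8)*a^2*R + (-8)*a^2*R^3 + (18)*a^3*R^2 + (72)*a^4*R + (72)*a^4*R^3 + (-378)*a^5*R^2 + (486)*a^7*R^2) * hq
      have hX : 0 < (4*a*R*(1-9*a^2)) * (2*a*R*(1-9*a^2))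
            - ((3*a^2+1)*R*(1-9*a^2) - 4*a*(1-R^2)) * (R*(1-9*a^2)*(1-3*a^2) + 4*a*(1-R^2)) := by
        have h5 := mul_neg_of_neg_of_pos hI3 (mul_pos hNb (show 0 < -(2*a*R*(1-9*a^2)) by linarith))
        have h6 : ((4*a*R*(1-9*a^2)) * (2*a*R*(1-9*a^2))
            - ((3*a^2+1)*R*(1-9*a^2) - 4*a*(1-R^2)) * (R*(1-9*a^2)*(1-3*a^2) + 4*a*(1-R^2)))
            * (4*a*R*(1-9*a^2)) < 0 := by rw [hXDb]; linarith [h5]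
        by_contra hcon
        push_neg at hcon
        linarith [h6, mul_nonneg (neg_nonneg.2 hcon) (neg_nonneg.2 hDb.le)]
      linarith [hX]
    · -- c < a
      rw [hce, div_lt_iff_of_neg hDc]
      have hgoal : R*(1-9*a^2)*(1-3*a^2) + 4*a*(1-R^2) - a*(2*a*R*(1-9*a^2))
          = 2*(4*a + R*(9*a^4+2*a^2+1)) := by linear_combination hq
      linarith [P2, hgoal]
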